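/- Let n ≥ 1 and let γ = (τ, s) be a skew-symmetric (n,n)-clan on 2n positions that avoids the pattern (1,2,1,2). Then the permutation v(γ) ∈ S_{2n} is a signed element of S_{2n}, i.e., v(γ)(2n+1−k) = 2n+1−v(γ)(k) for all k ∈ {1,…,2n}. -/

import Mathlib

open Finset

private lemma card_lt_val {m : ℕ} (a : ℕ) (ha : a ≤ m) :
    (univ.filter fun v : Fin m => (v : ℕ) < a).card = a := by
  have : (univ.filter fun v : Fin m => (v : ℕ) < a).image Fin.val = Finset.range a := by
    ext x
    simp only [mem_image, mem_filter, mem_univ, true_and, mem_range]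
    constructor
    · rintro ⟨v, hv, rfl⟩; exact hv
    · intro hx; exact ⟨⟨x, lt_of_lt_of_le hx ha⟩, hx, rfl⟩
  have hinj : (univ.filter fun v : Fin m => (v : ℕ) < a).card
      = ((univ.filter fun v : Fin m => (v : ℕ) < a).image Fin.val).card :=
    (Finset.card_image_of_injective _ Fin.val_injective).symm
  rw [hinj, this, Finset.card_range]

private lemma card_filter_perm {m : ℕ} (π : Equiv.Perm (Fin m)) (Q : Fin m → Prop)
    [DecidablePred Q] :
    (univ.filter fun j => Q (π j)).card = (univ.filter Q).card := by
  rw [← Finset.card_image_of_injective (univ.filter fun j => Q (π j)) π.injective]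
  congr 1
  ext v
  simp only [mem_image, mem_filter, mem_univ, true_and]
  constructor
  · rintro ⟨j, hj, rfl⟩; exact hj
  · intro hv; exact ⟨π.symm v, by simpa using hv, by simp⟩

private lemma perm_val_formula {n : ℕ} (P : Fin (2 * n) → Prop) [DecidablePred P]
    (π : Equiv.Perm (Fin (2 * n)))
    (hmem : ∀ i, P i ↔ (π i : ℕ) < n)
    (hA : ∀ i j, P i → P j → i < j → π i < π j)
    (hB : ∀ i j, ¬ P i → ¬ P j → i < j → π i < π j)
    (i : Fin (2 * n)) :
    (π i : ℕ) = if P i then (univ.filter fun j => P j ∧ j < i).card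
      else n + (univ.filter fun j => ¬ P j ∧ j < i).card := by
  have key : (π i : ℕ) = (univ.filter fun j => π j < π i).card := by
    rw [show (univ.filter fun j => π j < π i)
        = univ.filter (fun j => ((π j : ℕ) < (π i : ℕ))) from by
      ext j; simp only [mem_filter, mem_univ, true_and, Fin.lt_def]]
    rw [card_filter_perm π (fun v => (v : ℕ) < (π i : ℕ)),
      card_lt_val _ (le_of_lt (π i).isLt)]
  by_cases hP : P i
  · rw [if_pos hP, key]
    congr 1
    ext j
    simp only [mem_filter, mem_univ, true_and]
    constructor
    · intro hj
      have hPj : P j := (hmem j).mpr (lt_of_lt_of_le hj ((hmem i).mp hP).le)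
      refine ⟨hPj, ?_⟩
      rcases lt_trichotomy j i with h | h | h
      · exact h
      · subst h; exact absurd hj (lt_irrefl _)
      · exact absurd (hA i j hP hPj h) (not_lt_of_gt (Fin.lt_def.mpr hj))
    · rintro ⟨hPj, hji⟩
      exact Fin.lt_def.mp (hA j i hPj hP hji)
  · rw [if_neg hP, key]
    have hge : n ≤ (π i : ℕ) := le_of_not_gt (fun h => hP ((hmem i).mpr h))
    have hsplit : (univ.filter fun j => π j < π i)
        = (univ.filter P) ∪ (univ.filter fun j => ¬ P j ∧ j < i) := by
      ext j
      simp only [mem_union, mem_filter, mem_univ, true_and]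
      constructor
      · intro hj
        by_cases hPj : P j
        · exact Or.inl hPj
        · refine Or.inr ⟨hPj, ?_⟩
          rcases lt_trichotomy j i with h | h | h
          · exact h
          · subst h; exact absurd hj (lt_irrefl _)
          · exact absurd (hB i j hP hPj h) (not_lt_of_gt (Fin.lt_def.mpr hj))
      · rintro (hPj | ⟨hPj, hji⟩)
        · exact Fin.lt_def.mpr (lt_of_lt_of_le ((hmem j).mp hPj) hge)
        · exact hB j i hPj hP hji
    have hdisj : Disjoint (univ.filter P) (univ.filter fun j => ¬ P j ∧ j < i) := by
      rw [Finset.disjoint_filter]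
      intro x _ hp hq
      exact hq.1 hp
    have hcardP : (univ.filter P).card = n := by
      have h1 : (univ.filter P) = univ.filter fun j => ((π j : ℕ) < n) := by
        ext j; simp [hmem j]
      rw [h1, card_filter_perm π (fun v => (v : ℕ) < n), card_lt_val n (by omega)]
    rw [hsplit, Finset.card_union_of_disjoint hdisj, hcardP]

theorem stmt_1 (n : ℕ) (hn : 1 ≤ n)
    (τ : Equiv.Perm (Fin (2 * n))) (s : Fin (2 * n) → ℤ)
    -- τ is an involution
    (hinv : ∀ i, τ (τ i) = i)
    -- signs of fixed points are ±1
    (hsgn : ∀ i, τ i = i → s i = 1 ∨ s i = -1)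
    -- (n,n)-clan: #(plus fixed points) - #(minus fixed points) = n - n = 0
    (hbal : (Finset.univ.filter (fun i => τ i = i ∧ s i = 1)).card
          = (Finset.univ.filter (fun i => τ i = i ∧ s i = -1)).card)
    -- skew-symmetry: τ ∘ ρ = ρ ∘ τ (with ρ(i) = 2n+1-i, i.e. `Fin.rev`), and
    -- every fixed point i has ρ(i) fixed with the opposite sign
    (hskew₁ : ∀ i, τ i.rev = (τ i).rev)
    (hskew₂ : ∀ i, τ i = i → τ i.rev = i.rev ∧ s i.rev = - s i)
    -- γ avoids the pattern (1,2,1,2)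
    (havoid : ¬ ∃ i j k l : Fin (2 * n), i < j ∧ j < k ∧ k < l ∧ τ i = k ∧ τ j = l)
    -- π = v(γ)
    (π : Equiv.Perm (Fin (2 * n)))
    (hπmem : ∀ i, ((τ i = i ∧ s i = 1) ∨ i < τ i) ↔ (π i : ℕ) < n)
    (hπincA : ∀ i j : Fin (2 * n), ((τ i = i ∧ s i = 1) ∨ i < τ i) →
        ((τ j = j ∧ s j = 1) ∨ j < τ j) → i < j → π i < π j)
    (hπincB : ∀ i j : Fin (2 * n), ¬ ((τ i = i ∧ s i = 1) ∨ i < τ i) →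
        ¬ ((τ j = j ∧ s j = 1) ∨ j < τ j) → i < j → π i < π j) :
    ∀ k : Fin (2 * n), π k.rev = (π k).rev := by
  classical
  set P : Fin (2 * n) → Prop := fun i => (τ i = i ∧ s i = 1) ∨ i < τ i with hPdef
  -- key complementarity
  have hcomp : ∀ i, P i ↔ ¬ P i.rev := by
    intro i
    by_cases h : τ i = i
    · obtain ⟨hfix, hs⟩ := hskew₂ i h
      have h1 : P i ↔ s i = 1 := by
        simp only [hPdef]
        constructor
        · rintro (⟨_, hs1⟩ | hlt)
          · exact hs1
          · rw [h] at hlt; exact absurd hlt (lt_irrefl _)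
        · intro hs1; exact Or.inl ⟨h, hs1⟩
      have h2 : P i.rev ↔ s i = -1 := by
        simp only [hPdef]
        constructor
        · rintro (⟨_, hs1⟩ | hlt)
          · rw [hs] at hs1; omega
          · rw [hfix] at hlt; exact absurd hlt (lt_irrefl _)
        · intro hs1; exact Or.inl ⟨hfix, by rw [hs, hs1]; ring⟩
      rw [h1, h2]
      rcases hsgn i h with h' | h' <;> simp [h'] <;> omega
    · have hrevne : τ i.rev ≠ i.rev := by
        rw [hskew₁ i]
        intro hc
        exact h (Fin.rev_injective hc)
      have h1 : P i ↔ i < τ i := by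
        simp only [hPdef]
        constructor
        · rintro (⟨hf, _⟩ | hlt)
          · exact absurd hf h
          · exact hlt
        · exact Or.inr
      have h2 : P i.rev ↔ τ i < i := by
        simp only [hPdef]
        constructor
        · rintro (⟨hf, _⟩ | hlt)
          · exact absurd hf hrevne
          · rw [hskew₁ i] at hlt
            exact Fin.rev_lt_rev.mp hlt
        · intro hlt
          exact Or.inr (by rw [hskew₁ i]; exact Fin.rev_lt_rev.mpr hlt)
      rw [h1, h2]
      constructor
      · intro hlt hlt'
        exact absurd (hlt.trans hlt') (lt_irrefl _)
      · intro hnlt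
        rcases lt_trichotomy i (τ i) with h' | h' | h'
        · exact h'
        · exact absurd h'.symm h
        · exact absurd h' hnlt
  -- σ = rev ∘ π ∘ rev
  set σ : Equiv.Perm (Fin (2 * n)) :=
    (Fin.revPerm.trans (π.trans Fin.revPerm) : Equiv.Perm (Fin (2 * n))) with hσdef
  have hσ : ∀ i, σ i = (π i.rev).rev := by intro i; rfl
  have hrevlt : ∀ v : Fin (2 * n), ((v.rev : ℕ) < n ↔ n ≤ (v : ℕ)) := by
    intro v
    have h1 : (v.rev : ℕ) = 2 * n - (v + 1) := Fin.val_rev v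
    have := v.isLt
    omega
  have hσmem : ∀ i, P i ↔ (σ i : ℕ) < n := by
    intro i
    rw [hσ i, hrevlt, hcomp i]
    have h := hπmem i.rev
    constructor
    · intro hnp
      exact le_of_not_gt (fun hc => hnp (h.mpr hc))
    · intro hge hp
      exact absurd (h.mp hp) (not_lt.mpr hge)
  have hσA : ∀ i j, P i → P j → i < j → σ i < σ j := by
    intro i j hi hj hij
    rw [hσ i, hσ j]
    apply Fin.rev_lt_rev.mpr
    exact hπincB _ _ ((hcomp j).mp hj ∘ fun h => h) ((hcomp i).mp hi)
      (Fin.rev_lt_rev.mpr hij)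
  have hσB : ∀ i j, ¬ P i → ¬ P j → i < j → σ i < σ j := by
    intro i j hi hj hij
    rw [hσ i, hσ j]
    apply Fin.rev_lt_rev.mpr
    have hPi : P i.rev := by
      by_contra hc; exact hi ((hcomp i).mpr hc)
    have hPj : P j.rev := by
      by_contra hc; exact hj ((hcomp j).mpr hc)
    exact hπincA _ _ hPj hPi (Fin.rev_lt_rev.mpr hij)
  have heq : ∀ i, σ i = π i := by
    intro i
    have h1 := perm_val_formula P π hπmem hπincA hπincB i
    have h2 := perm_val_formula P σ hσmem hσA hσB i
    exact Fin.val_injective (h2.trans h1.symm)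
  intro k
  have := heq k
  rw [hσ k] at this
  calc π k.rev = ((π k.rev).rev).rev := (Fin.rev_rev _).symm
    _ = (π k).rev := by rw [this]
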